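/- arXiv:1603.04681 — 2 statements merged into one kernel-verified Lean document; each statement's English description precedes it below -/
import Mathlib

section
/- Let C and D be pretriangulated categories. Let G : C ⥤ D and L : D ⥤ C be additive functors, each equipped with a natural isomorphism commuting it with the shift functors and sending distinguished triangles to distinguished triangles (triangulated functors). Suppose there are natural transformations s : 𝟭_C ⟶ G ⋙ L and e : (G ⋙ L) ⟶ 𝟭_C, both compatible with the shift-commutation isomorphisms, such that s ≫ e = 𝟙. Then a triangle T in C is distinguished if and only if the triangle G(T) in D — obtained by applying G to the three objects and three morphisms of T, composing the third morphism with the isomorphism G(X⟦1⟧) ≅ (G X)⟦1⟧ — is distinguished in D. -/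
open CategoryTheory CategoryTheory.Pretriangulated CategoryTheory.Category
  CategoryTheory.Limits CategoryTheory.Preadditive

/-- A retract of a distinguished triangle is distinguished. -/
lemma retract_distinguished_aux {C : Type*} [Category C]
    [Preadditive C] [Limits.HasZeroObject C] [HasShift C ℤ]
    [∀ n : ℤ, (shiftFunctor C n).Additive] [Pretriangulated C]
    {T T' : Triangle C} (i : T ⟶ T') (r : T' ⟶ T)
    (hir : i ≫ r = 𝟙 T) (hT' : T' ∈ distTriang C) : T ∈ distTriang C := by
  have h1 : i.hom₁ ≫ r.hom₁ = 𝟙 _ := congrArg TriangleMorphism.hom₁ hir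
  have h2 : i.hom₂ ≫ r.hom₂ = 𝟙 _ := congrArg TriangleMorphism.hom₂ hir
  have h3 : i.hom₃ ≫ r.hom₃ = 𝟙 _ := congrArg TriangleMorphism.hom₃ hir
  -- coyoneda exactness of `T` at positions 2 and 3, deduced from the retraction
  have ex2 : ∀ {A : C} (f : A ⟶ T.obj₂), f ≫ T.mor₂ = 0 →
      ∃ g : A ⟶ T.obj₁, f = g ≫ T.mor₁ := by
    intro A f hf
    obtain ⟨g, hg⟩ := Triangle.coyoneda_exact₂ _ hT' (f ≫ i.hom₂)
      (by rw [assoc, ← i.comm₂, reassoc_of% hf, zero_comp])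
    refine ⟨g ≫ r.hom₁, ?_⟩
    have : f = f ≫ i.hom₂ ≫ r.hom₂ := by rw [h2, comp_id]
    rw [this, reassoc_of% hg, assoc, ← r.comm₁]
  have ex3 : ∀ {A : C} (f : A ⟶ T.obj₃), f ≫ T.mor₃ = 0 →
      ∃ g : A ⟶ T.obj₂, f = g ≫ T.mor₂ := by
    intro A f hf
    obtain ⟨g, hg⟩ := Triangle.coyoneda_exact₃ _ hT' (f ≫ i.hom₃)
      (by rw [assoc, ← i.comm₃, reassoc_of% hf, zero_comp])
    refine ⟨g ≫ r.hom₂, ?_⟩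
    have : f = f ≫ i.hom₃ ≫ r.hom₃ := by rw [h3, comp_id]
    rw [this, reassoc_of% hg, assoc, ← r.comm₂]
  -- the composition `T.mor₃ ≫ T.mor₁⟦1⟧'` vanishes
  have zero31 : T.mor₃ ≫ T.mor₁⟦(1 : ℤ)⟧' = 0 := by
    have : T.mor₃ = i.hom₃ ≫ T'.mor₃ ≫ r.hom₁⟦(1 : ℤ)⟧' := by
      rw [← reassoc_of% i.comm₃, ← Functor.map_comp, h1,
        CategoryTheory.Functor.map_id, comp_id]
    rw [this, assoc, assoc, ← Functor.map_comp, ← r.comm₁, Functor.map_comp,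
      ← assoc (T'.mor₃), comp_distTriang_mor_zero₃₁ _ hT', zero_comp, comp_zero]
  -- complete `T.mor₁` to a distinguished triangle `T''`
  obtain ⟨Z, g, h, hT''⟩ := distinguished_cocone_triangle T.mor₁
  replace hT'' : Triangle.mk' T.obj₁ T.obj₂ Z T.mor₁ g h ∈ distTriang C := hT''
  obtain ⟨c, hc₁, hc₂⟩ := complete_distinguished_triangle_morphism
    (Triangle.mk' _ _ _ T.mor₁ g h) T' hT'' hT' i.hom₁ i.hom₂ i.comm₁
  dsimp at hc₁ hc₂
  set d : Z ⟶ T.obj₃ := c ≫ r.hom₃ with hd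
  have key₂ : g ≫ d = T.mor₂ := by
    rw [hd, reassoc_of% hc₁, r.comm₂, ← assoc, h2, id_comp]
  have key₃ : d ≫ T.mor₃ = h := by
    rw [hd, assoc, ← r.comm₃, ← reassoc_of% hc₂, ← Functor.map_comp, h1,
      CategoryTheory.Functor.map_id, comp_id]
  have : IsIso d := by
    refine isIso_of_yoneda_map_bijective d (fun A => ⟨?_, ?_⟩)
    · intro f₁ f₂ hff
      dsimp at hff
      rw [← sub_eq_zero] at hff ⊢
      rw [← sub_comp] at hff
      set f := f₁ - f₂ with hfdef
      have hfh : f ≫ h = 0 := by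
        rw [← key₃, reassoc_of% hff, zero_comp]
      obtain ⟨y, hy⟩ := Triangle.coyoneda_exact₃ _ hT'' f hfh
      dsimp at hy
      have hy2 : y ≫ T.mor₂ = 0 := by
        rw [← key₂, ← reassoc_of% hy]
        exact hff
      obtain ⟨x, hx⟩ := ex2 y hy2
      have hzero : T.mor₁ ≫ g = 0 := comp_distTriang_mor_zero₁₂ _ hT''
      rw [hy, hx, assoc, hzero, comp_zero]
    · intro y
      have hzz : (y ≫ T.mor₃) ≫ (Triangle.mk' _ _ _ T.mor₁ g h).mor₁⟦(1 : ℤ)⟧' = 0 := by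
        dsimp
        rw [assoc, zero31, comp_zero]
      obtain ⟨z, hz⟩ := Triangle.coyoneda_exact₁ _ hT'' (y ≫ T.mor₃) hzz
      dsimp at hz
      let z' : A ⟶ Z := z
      have hz' : y ≫ T.mor₃ = z' ≫ h := hz
      have hsub : (y - z' ≫ d) ≫ T.mor₃ = 0 := by
        rw [sub_comp, assoc, key₃, hz']
        exact sub_self _
      obtain ⟨w, hw⟩ := ex3 _ hsub
      refine ⟨z' + w ≫ g, ?_⟩
      dsimp
      rw [add_comp, assoc, key₂, ← hw]
      abel
  exact isomorphic_distinguished _ hT'' _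
    (Triangle.isoMk T (Triangle.mk' _ _ _ T.mor₁ g h) (Iso.refl _) (Iso.refl _)
      (asIso d).symm
      (by dsimp; rw [id_comp, comp_id])
      (by dsimp; rw [id_comp, IsIso.comp_inv_eq, key₂])
      (by dsimp; rw [CategoryTheory.Functor.map_id, comp_id, IsIso.eq_inv_comp, key₃]))

/-- Let `G : C ⥤ D` and `L : D ⥤ C` be triangulated functors between pretriangulated
categories. If there are natural transformations `s : 𝟭 C ⟶ G ⋙ L` and `e : G ⋙ L ⟶ 𝟭 C`,
both compatible with the shifts, such that `s ≫ e = 𝟙`, then a triangle `T` of `C` is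
distinguished if and only if its image `G.mapTriangle.obj T` is distinguished in `D`. -/
theorem distinguished_iff_map_distinguished_of_split_unit
    {C D : Type*} [Category C] [Category D]
    [Preadditive C] [Limits.HasZeroObject C] [HasShift C ℤ]
    [∀ n : ℤ, (shiftFunctor C n).Additive] [Pretriangulated C]
    [Preadditive D] [Limits.HasZeroObject D] [HasShift D ℤ]
    [∀ n : ℤ, (shiftFunctor D n).Additive] [Pretriangulated D]
    (G : C ⥤ D) (L : D ⥤ C) [G.Additive] [L.Additive]
    [G.CommShift ℤ] [L.CommShift ℤ] [G.IsTriangulated] [L.IsTriangulated]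
    (s : 𝟭 C ⟶ G ⋙ L) (e : G ⋙ L ⟶ 𝟭 C)
    [NatTrans.CommShift s ℤ] [NatTrans.CommShift e ℤ]
    (hse : s ≫ e = 𝟙 (𝟭 C)) (T : Triangle C) :
    (T ∈ distTriang C) ↔ G.mapTriangle.obj T ∈ distTriang D := by
  constructor
  · exact G.map_distinguished T
  · intro hT'
    -- `(G ⋙ L).mapTriangle.obj T` is distinguished
    have hU : (G ⋙ L).mapTriangle.obj T ∈ distTriang C :=
      isomorphic_distinguished _ (L.map_distinguished _ hT') _
        ((Functor.mapTriangleCompIso G L).app T)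
    -- `T` is a retract of `(G ⋙ L).mapTriangle.obj T`
    refine retract_distinguished_aux
      (Triangle.homMk T ((G ⋙ L).mapTriangle.obj T)
        (s.app T.obj₁) (s.app T.obj₂) (s.app T.obj₃)
        (by exact s.naturality T.mor₁)
        (by exact s.naturality T.mor₂)
        ?_)
      (Triangle.homMk ((G ⋙ L).mapTriangle.obj T) T
        (e.app T.obj₁) (e.app T.obj₂) (e.app T.obj₃)
        (by exact e.naturality T.mor₁)
        (by exact e.naturality T.mor₂)
        ?_)
      ?_ hU
    · have hn := s.naturality T.mor₃
      dsimp at hn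
      have h2 := NatTrans.shift_app_comm s (1 : ℤ) T.obj₁
      rw [Functor.commShiftIso_id_hom_app] at h2
      dsimp at h2
      rw [id_comp] at h2
      change T.mor₃ ≫ (s.app T.obj₁)⟦(1:ℤ)⟧' = s.app T.obj₃ ≫ (L.map (G.map T.mor₃) ≫ ((G ⋙ L).commShiftIso (1:ℤ)).hom.app T.obj₁)
      rw [h2, ← reassoc_of% hn]
    · have hn := e.naturality T.mor₃
      dsimp at hn
      have h2 := NatTrans.shift_app_comm e (1 : ℤ) T.obj₁
      rw [Functor.commShiftIso_id_hom_app] at h2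
      simp only [Functor.id_obj, Functor.comp_obj, comp_id] at h2
      change (L.map (G.map T.mor₃) ≫ ((G ⋙ L).commShiftIso (1:ℤ)).hom.app T.obj₁) ≫ (e.app T.obj₁)⟦(1:ℤ)⟧' = e.app T.obj₃ ≫ T.mor₃
      rw [assoc, h2, hn]
    · ext
      · exact NatTrans.congr_app hse T.obj₁
      · exact NatTrans.congr_app hse T.obj₂
      · exact NatTrans.congr_app hse T.obj₃
end

section
/- Let R be a commutative ring and S a commutative R-algebra. Suppose the multiplication map μ : S ⊗[R] S → S admits an R-linear section σ : S → S ⊗[R] S (i.e., μ ∘ σ = id_S) which is a map of S-bimodules, meaning σ(a * s) = (a ⊗ 1) * σ(s) and σ(a * s) = (1 ⊗ a) * σ(s) for all a, s ∈ S. Then there is a family of S-linear maps s_X : X → S ⊗[R] X, one for each S-module X (where S ⊗[R] X is an S-module through the left tensor factor and X is regarded as an R-module by restriction of scalars along R → S), such that ε_X ∘ s_X = id_X, where ε_X : S ⊗[R] X → X is the S-linear action map determined by s ⊗ x ↦ s • x, and such that for every S-linear map f : X → Y one has (id_S ⊗ f) ∘ s_X = s_Y ∘ f (naturality). -/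
open TensorProduct

universe u v w

/-- For an `S`-module `X` (with compatible `R`-module structure by restriction of scalars
along `R → S`), the counit `ε_X : S ⊗[R] X →ₗ[S] X` is the `S`-linear action map
determined by `s ⊗ x ↦ s • x`. -/
noncomputable def tensorCounit (R : Type u) (S : Type v) [CommRing R] [CommRing S]
    [Algebra R S] (X : Type w) [AddCommGroup X] [Module R X] [Module S X]
    [IsScalarTower R S X] : S ⊗[R] X →ₗ[S] X :=
  LinearMap.liftBaseChange S (LinearMap.id : X →ₗ[R] X)

set_option linter.unusedSectionVars false
section Aux
variable {R : Type u} {S : Type v} [CommRing R] [CommRing S] [Algebra R S]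
variable {X : Type w} [AddCommGroup X] [Module R X] [Module S X] [IsScalarTower R S X]

lemma aux_baseChange_mul_right (f : S →ₗ[R] X) (a : S) (e : S ⊗[R] S) :
    LinearMap.baseChange S f (((1 : S) ⊗ₜ[R] a) * e) =
      LinearMap.baseChange S (f.comp (LinearMap.mulLeft R a)) e := by
  induction e using TensorProduct.induction_on with
  | zero => simp
  | tmul c b => simp [Algebra.TensorProduct.tmul_mul_tmul]
  | add x y hx hy => simp [mul_add, hx, hy]

lemma aux_smul_eq (a : S) (e : S ⊗[R] S) : (a ⊗ₜ[R] (1 : S)) * e = a • e := by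
  induction e using TensorProduct.induction_on with
  | zero => simp
  | tmul c b => simp [Algebra.TensorProduct.tmul_mul_tmul, smul_tmul']
  | add x y hx hy => simp [mul_add, hx, hy, smul_add]

lemma aux_lift (x : X) (e : S ⊗[R] S) :
    LinearMap.liftBaseChange S ((LinearMap.toSpanSingleton S X x).restrictScalars R) e
      = (LinearMap.mul' R S e) • x := by
  induction e using TensorProduct.induction_on with
  | zero => simp
  | tmul c b => simp [mul_smul]
  | add p q hp hq => simp [hp, hq, add_smul]

end Aux

/-- If the multiplication map `μ = LinearMap.mul' R S : S ⊗[R] S → S` of a commutative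
`R`-algebra `S` admits an `R`-linear section `σ` which is a map of `S`-bimodules, then
there is a family of `S`-linear maps `s_X : X → S ⊗[R] X`, natural in the `S`-module `X`,
splitting the counit `ε_X : S ⊗[R] X → X`. -/

theorem exists_natural_splitting_of_separable
    {R : Type u} {S : Type v} [CommRing R] [CommRing S] [Algebra R S]
    (σ : S →ₗ[R] S ⊗[R] S)
    (hσμ : ∀ t : S, LinearMap.mul' R S (σ t) = t)
    (hleft : ∀ a t : S, σ (a * t) = (a ⊗ₜ[R] (1 : S)) * σ t)
    (hright : ∀ a t : S, σ (a * t) = ((1 : S) ⊗ₜ[R] a) * σ t) :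
    ∃ s : ∀ (X : Type w) [AddCommGroup X] [Module R X] [Module S X] [IsScalarTower R S X],
        X →ₗ[S] S ⊗[R] X,
      (∀ (X : Type w) [AddCommGroup X] [Module R X] [Module S X] [IsScalarTower R S X],
        (tensorCounit R S X).comp (s X) = LinearMap.id) ∧
      (∀ (X Y : Type w) [AddCommGroup X] [Module R X] [Module S X] [IsScalarTower R S X]
          [AddCommGroup Y] [Module R Y] [Module S Y] [IsScalarTower R S Y] (f : X →ₗ[S] Y),
        (LinearMap.baseChange S (f.restrictScalars R)).comp (s X) = (s Y).comp f) := by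
  classical
  refine ⟨fun X _ _ _ _ =>
    { toFun := fun x => LinearMap.baseChange S
        ((LinearMap.toSpanSingleton S X x).restrictScalars R) (σ 1)
      map_add' := fun x y => ?_
      map_smul' := fun a x => ?_ }, ?_, ?_⟩
  · have h : ((LinearMap.toSpanSingleton S X (x + y)).restrictScalars R) =
        ((LinearMap.toSpanSingleton S X x).restrictScalars R) +
        ((LinearMap.toSpanSingleton S X y).restrictScalars R) := by
      ext b; simp [smul_add]
    simp only [h, LinearMap.baseChange_add, LinearMap.add_apply]
  · have h : ((LinearMap.toSpanSingleton S X (a • x)).restrictScalars R) =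
        ((LinearMap.toSpanSingleton S X x).restrictScalars R).comp
          (LinearMap.mulLeft R a) := by
      ext b; simp [smul_smul, mul_comm]
    simp only [LinearMap.coe_mk, AddHom.coe_mk, RingHom.id_apply, h]
    rw [← aux_baseChange_mul_right, ← hright a 1, hleft a 1, aux_smul_eq, map_smul]
  · intro X _ _ _ _
    ext x
    simp only [LinearMap.comp_apply, LinearMap.coe_mk, AddHom.coe_mk, LinearMap.id_apply,
      tensorCounit]
    have h1 : (LinearMap.liftBaseChange S (LinearMap.id : X →ₗ[R] X)).comp
        (LinearMap.baseChange S ((LinearMap.toSpanSingleton S X x).restrictScalars R)) =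
        LinearMap.liftBaseChange S ((LinearMap.toSpanSingleton S X x).restrictScalars R) := by
      ext b; simp
    have := congrArg (fun g => g (σ 1)) h1
    simp only [LinearMap.comp_apply] at this
    rw [this, aux_lift, hσμ, one_smul]
  · intro X Y _ _ _ _ _ _ _ _ f
    ext x
    simp only [LinearMap.comp_apply, LinearMap.coe_mk, AddHom.coe_mk]
    have h1 : (LinearMap.baseChange S (f.restrictScalars R)).comp
        (LinearMap.baseChange S ((LinearMap.toSpanSingleton S X x).restrictScalars R)) =
        LinearMap.baseChange S ((LinearMap.toSpanSingleton S Y (f x)).restrictScalars R) := by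
      rw [← LinearMap.baseChange_comp]
      congr 1
      ext b; simp
    exact congrArg (fun g => g (σ 1)) h1
end
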